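/- arXiv:2410.00169 — 5 statements merged into one kernel-verified Lean document; each statement's English description precedes it below -/
import Mathlib

section
/- For S ∈ ℝ^{n×m} with ν = min(n,m), the regularizer r(S) = (1/2)‖S‖₂² − (1/(2ν))‖S‖_F² equals 0 if and only if all ν singular values σ₁(S), …, σ_ν(S) of S are equal. -/
open Matrix

/-- The Gram matrix `Sᵀ * S` of a real matrix is Hermitian (symmetric). -/
theorem gram_isHermitian {n m : ℕ} (S : Matrix (Fin n) (Fin m) ℝ) :
    (Sᵀ * S).IsHermitian := by
  simpa [Matrix.conjTranspose_eq_transpose_of_trivial] using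
    Matrix.isHermitian_conjTranspose_mul_self S

/-- The singular values of a real `n × m` matrix `S`, in nonincreasing order:
the nonnegative square roots of the `min n m` largest eigenvalues of `Sᵀ * S`. -/
noncomputable def svals {n m : ℕ} (S : Matrix (Fin n) (Fin m) ℝ) :
    Fin (min n m) → ℝ := fun i =>
  Real.sqrt (((gram_isHermitian S).eigenvalues ∘
    Tuple.sort (gram_isHermitian S).eigenvalues)
      ⟨m - 1 - i, by have := i.isLt; omega⟩)

/-- The operator norm of a matrix induced by the Euclidean norms. -/
noncomputable def opNorm {n m : ℕ} (S : Matrix (Fin n) (Fin m) ℝ) : ℝ :=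
  ‖LinearMap.toContinuousLinearMap (Matrix.toEuclideanLin S)‖

/-- The Frobenius norm of a matrix. -/
noncomputable def frobNorm {n m : ℕ} (S : Matrix (Fin n) (Fin m) ℝ) : ℝ :=
  Real.sqrt (∑ i, ∑ j, (S i j) ^ 2)

/-- The regularizer `r(S) = (1/2)‖S‖₂² − (1/(2ν))‖S‖_F²` with `ν = min n m`. -/
noncomputable def reg {n m : ℕ} (S : Matrix (Fin n) (Fin m) ℝ) : ℝ :=
  (1 / 2) * opNorm S ^ 2 - (1 / (2 * (min n m : ℝ))) * frobNorm S ^ 2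

/-- The largest singular value of `S`. -/
noncomputable def sigmaMax {n m : ℕ} (S : Matrix (Fin n) (Fin m) ℝ) : ℝ :=
  ⨆ i, svals S i

/-- The smallest nonzero singular value of `S`. -/
noncomputable def sigmaMinPos {n m : ℕ} (S : Matrix (Fin n) (Fin m) ℝ) : ℝ :=
  sInf {x | (∃ i, svals S i = x) ∧ 0 < x}

/-- The condition number `κ(S) = σ_max(S) / σ_min>0(S)`. -/
noncomputable def kappa {n m : ℕ} (S : Matrix (Fin n) (Fin m) ℝ) : ℝ :=
  sigmaMax S / sigmaMinPos S

/-- The rectangular diagonal `n × m` matrix with diagonal entries `d`. -/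
noncomputable def diagRect {n m : ℕ} (d : Fin (min n m) → ℝ) :
    Matrix (Fin n) (Fin m) ℝ := Matrix.of fun i j =>
  if h : (i : ℕ) = (j : ℕ) then
    d ⟨i, by have := i.isLt; have := j.isLt; omega⟩ else 0


namespace RegAux

variable {n m : ℕ}

noncomputable def lam (S : Matrix (Fin n) (Fin m) ℝ) : Fin m → ℝ :=
  (gram_isHermitian S).eigenvalues

noncomputable def lam' (S : Matrix (Fin n) (Fin m) ℝ) : Fin m → ℝ :=
  lam S ∘ Tuple.sort (lam S)

lemma svals_eq (S : Matrix (Fin n) (Fin m) ℝ) (i : Fin (min n m)) :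
    svals S i = Real.sqrt (lam' S ⟨m - 1 - i, by have := i.isLt; omega⟩) := rfl

lemma lam_nonneg (S : Matrix (Fin n) (Fin m) ℝ) (j : Fin m) : 0 ≤ lam S j := by
  have hps : (Sᵀ * S).PosSemidef := by
    simpa [Matrix.conjTranspose_eq_transpose_of_trivial] using
      Matrix.posSemidef_conjTranspose_mul_self S
  exact hps.eigenvalues_nonneg j

lemma lam'_nonneg (S : Matrix (Fin n) (Fin m) ℝ) (j : Fin m) : 0 ≤ lam' S j :=
  lam_nonneg S _

lemma lam'_mono (S : Matrix (Fin n) (Fin m) ℝ) : Monotone (lam' S) :=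
  Tuple.monotone_sort (lam S)

lemma lam_le_max (S : Matrix (Fin n) (Fin m) ℝ) (hm : 0 < m) (j : Fin m) :
    lam S j ≤ lam' S ⟨m - 1, by omega⟩ := by
  have h1 : lam S j = lam' S ((Tuple.sort (lam S))⁻¹ j) := by
    simp [lam', Function.comp]
  rw [h1]
  exact lam'_mono S (by simp [Fin.le_def]; omega)

/-- Sum over eigenvalues representation of the quadratic form. -/
lemma dot_eq_sum (S : Matrix (Fin n) (Fin m) ℝ) (x : Fin m → ℝ) :
    x ⬝ᵥ ((Sᵀ * S) *ᵥ x) =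
      ∑ j, lam S j *
        ((star ((gram_isHermitian S).eigenvectorUnitary : Matrix (Fin m) (Fin m) ℝ) *ᵥ x) j) ^ 2 := by
  set hA := gram_isHermitian S
  set U := (hA.eigenvectorUnitary : Matrix (Fin m) (Fin m) ℝ)
  set y := star U *ᵥ x with hy
  calc x ⬝ᵥ ((Sᵀ * S) *ᵥ x)
      = x ⬝ᵥ ((U * diagonal (RCLike.ofReal ∘ hA.eigenvalues) * star U) *ᵥ x) := by
        exact congrArg (fun M => x ⬝ᵥ (M *ᵥ x)) hA.spectral_theorem
    _ = (x ᵥ* U) ⬝ᵥ (diagonal (RCLike.ofReal ∘ hA.eigenvalues) *ᵥ y) := by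
        rw [← Matrix.mulVec_mulVec, ← Matrix.mulVec_mulVec, Matrix.dotProduct_mulVec]
    _ = y ⬝ᵥ (diagonal (RCLike.ofReal ∘ hA.eigenvalues) *ᵥ y) := by
        congr 1
        rw [hy, Matrix.star_eq_conjTranspose, Matrix.conjTranspose_eq_transpose_of_trivial,
          Matrix.mulVec_transpose]
    _ = ∑ j, lam S j * (y j) ^ 2 := by
        simp only [dotProduct, Matrix.mulVec_diagonal, Function.comp_apply,
          RCLike.ofReal_real_eq_id, id]
        refine Finset.sum_congr rfl fun j _ => ?_
        simp only [lam]
        ring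

lemma unit_dot (S : Matrix (Fin n) (Fin m) ℝ) (x : Fin m → ℝ) :
    (star ((gram_isHermitian S).eigenvectorUnitary : Matrix (Fin m) (Fin m) ℝ) *ᵥ x) ⬝ᵥ
      (star ((gram_isHermitian S).eigenvectorUnitary : Matrix (Fin m) (Fin m) ℝ) *ᵥ x) = x ⬝ᵥ x := by
  set hA := gram_isHermitian S
  set U := (hA.eigenvectorUnitary : Matrix (Fin m) (Fin m) ℝ)
  have h1 : U * star U = 1 := (Unitary.mem_iff.mp hA.eigenvectorUnitary.2).2
  calc (star U *ᵥ x) ⬝ᵥ (star U *ᵥ x)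
      = (x ᵥ* U) ⬝ᵥ (star U *ᵥ x) := by
        congr 1
        rw [Matrix.star_eq_conjTranspose, Matrix.conjTranspose_eq_transpose_of_trivial,
          Matrix.mulVec_transpose]
    _ = x ⬝ᵥ ((U * star U) *ᵥ x) := by
        rw [← Matrix.mulVec_mulVec, Matrix.dotProduct_mulVec x U]
    _ = x ⬝ᵥ x := by rw [h1, Matrix.one_mulVec]

lemma norm_sq_dot {k : ℕ} (v : EuclideanSpace ℝ (Fin k)) : ‖v‖ ^ 2 = (⇑v) ⬝ᵥ (⇑v) := by
  rw [EuclideanSpace.norm_eq, Real.sq_sqrt (by positivity)]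
  simp [dotProduct, sq]

lemma clm_norm_sq (S : Matrix (Fin n) (Fin m) ℝ) (x : EuclideanSpace ℝ (Fin m)) :
    ‖LinearMap.toContinuousLinearMap (Matrix.toEuclideanLin S) x‖ ^ 2 =
      (⇑x) ⬝ᵥ ((Sᵀ * S) *ᵥ ⇑x) := by
  rw [norm_sq_dot]
  have h1 : ⇑(LinearMap.toContinuousLinearMap (Matrix.toEuclideanLin S) x) = S *ᵥ ⇑x := rfl
  have h2 : (⇑x) ⬝ᵥ ((Sᵀ * S) *ᵥ ⇑x) = (S *ᵥ ⇑x) ⬝ᵥ (S *ᵥ ⇑x) := by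
    rw [← Matrix.mulVec_mulVec, Matrix.dotProduct_mulVec, Matrix.vecMul_transpose]
  rw [h1, h2]

lemma gram_dot_le (S : Matrix (Fin n) (Fin m) ℝ) (hm : 0 < m) (x : Fin m → ℝ) :
    x ⬝ᵥ ((Sᵀ * S) *ᵥ x) ≤ lam' S ⟨m - 1, by omega⟩ * (x ⬝ᵥ x) := by
  rw [dot_eq_sum, ← unit_dot S x]
  set y := star ((gram_isHermitian S).eigenvectorUnitary : Matrix (Fin m) (Fin m) ℝ) *ᵥ x
  have : (y ⬝ᵥ y) = ∑ j, (y j) ^ 2 := by simp [dotProduct, sq]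
  rw [this, Finset.mul_sum]
  exact Finset.sum_le_sum fun j _ =>
    mul_le_mul_of_nonneg_right (lam_le_max S hm j) (sq_nonneg _)

lemma opNorm_eq (S : Matrix (Fin n) (Fin m) ℝ) (hm : 0 < m) :
    opNorm S = Real.sqrt (lam' S ⟨m - 1, by omega⟩) := by
  set lmax := lam' S ⟨m - 1, by omega⟩ with hlm
  have hlnn : 0 ≤ lmax := lam'_nonneg S _
  apply le_antisymm
  · apply ContinuousLinearMap.opNorm_le_bound _ (Real.sqrt_nonneg _)
    intro x
    have h1 : ‖LinearMap.toContinuousLinearMap (Matrix.toEuclideanLin S) x‖ ^ 2 ≤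
        lmax * ‖x‖ ^ 2 := by
      rw [clm_norm_sq, norm_sq_dot]
      exact gram_dot_le S hm ⇑x
    have h2 := Real.sqrt_le_sqrt h1
    rwa [Real.sqrt_sq (norm_nonneg _), Real.sqrt_mul hlnn, Real.sqrt_sq (norm_nonneg _)] at h2
  · -- lower bound via eigenvector
    set j : Fin m := Tuple.sort (lam (S := S)) ⟨m - 1, by omega⟩ with hj
    have hjl : lam S j = lmax := rfl
    set v : EuclideanSpace ℝ (Fin m) := (gram_isHermitian S).eigenvectorBasis j with hv
    have hv1 : ‖v‖ = 1 := (gram_isHermitian S).eigenvectorBasis.orthonormal.1 j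
    have hAv : (Sᵀ * S) *ᵥ ⇑v = lam S j • ⇑v := (gram_isHermitian S).mulVec_eigenvectorBasis j
    have h1 : ‖LinearMap.toContinuousLinearMap (Matrix.toEuclideanLin S) v‖ ^ 2 = lmax := by
      rw [clm_norm_sq, hAv, hjl]
      have : (⇑v) ⬝ᵥ (lmax • ⇑v) = lmax * ((⇑v) ⬝ᵥ ⇑v) := by
        simp only [dotProduct, Pi.smul_apply, smul_eq_mul, Finset.mul_sum]
        exact Finset.sum_congr rfl fun _ _ => by ring
      rw [this, ← norm_sq_dot, hv1]
      ring
    have h2 : Real.sqrt lmax = ‖LinearMap.toContinuousLinearMap (Matrix.toEuclideanLin S) v‖ := by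
      rw [← h1, Real.sqrt_sq (norm_nonneg _)]
    rw [h2]
    calc ‖LinearMap.toContinuousLinearMap (Matrix.toEuclideanLin S) v‖
        ≤ ‖LinearMap.toContinuousLinearMap (Matrix.toEuclideanLin S)‖ * ‖v‖ :=
          ContinuousLinearMap.le_opNorm _ v
      _ = opNorm S := by rw [hv1, opNorm, mul_one]

lemma frob_sq (S : Matrix (Fin n) (Fin m) ℝ) : frobNorm S ^ 2 = ∑ j, lam S j := by
  have h0 : frobNorm S ^ 2 = ∑ i, ∑ j, (S i j) ^ 2 := by
    rw [frobNorm, Real.sq_sqrt (by positivity)]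
  have h1 : (Sᵀ * S).trace = ∑ i, ∑ j, (S i j) ^ 2 := by
    rw [Matrix.trace, Finset.sum_comm]
    exact Finset.sum_congr rfl fun i _ => by
      simp [Matrix.diag, Matrix.mul_apply, sq, Finset.sum_comm (s := Finset.univ)]
  have h2 : (Sᵀ * S).trace = ∑ j, lam S j := by
    set hA := gram_isHermitian S
    set U := (hA.eigenvectorUnitary : Matrix (Fin m) (Fin m) ℝ)
    have hU : star U * U = 1 := (Unitary.mem_iff.mp hA.eigenvectorUnitary.2).1
    calc (Sᵀ * S).trace
        = (U * diagonal (RCLike.ofReal ∘ hA.eigenvalues) * star U).trace := by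
          exact congrArg Matrix.trace hA.spectral_theorem
      _ = (star U * U * diagonal (RCLike.ofReal ∘ hA.eigenvalues)).trace := by
          rw [Matrix.trace_mul_cycle]
      _ = ∑ j, lam S j := by
          rw [hU, one_mul, Matrix.trace_diagonal]
          simp [lam]
  rw [h0, ← h1, h2]

lemma lam'_zero (S : Matrix (Fin n) (Fin m) ℝ) (h : n < m) (k : ℕ) (hk : k < m - n)
    (hkm : k < m) : lam' S ⟨k, hkm⟩ = 0 := by
  by_contra h0
  have hpos : 0 < lam' S ⟨k, hkm⟩ := lt_of_le_of_ne (lam'_nonneg S _) (Ne.symm h0)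
  have hrank : (Sᵀ * S).rank = Fintype.card {i // lam S i ≠ 0} :=
    (gram_isHermitian S).rank_eq_card_non_zero_eigs
  have hrle : (Sᵀ * S).rank ≤ n := by
    rw [Matrix.rank_transpose_mul_self S]
    simpa using Matrix.rank_le_card_height S
  have hcard : Fintype.card {i // lam' S i ≠ 0} = Fintype.card {i // lam S i ≠ 0} :=
    Fintype.card_congr ((Tuple.sort (lam S)).subtypeEquiv (fun i => Iff.rfl))
  have hinj : Function.Injective
      (fun i : Fin (m - k) => (⟨⟨k + i.1, by omega⟩,
        ne_of_gt (lt_of_lt_of_le hpos (lam'_mono S (by simp [Fin.le_def])))⟩ :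
          {i : Fin m // lam' S i ≠ 0})) := by
    intro a b hab
    have := congrArg (fun z : {i : Fin m // lam' S i ≠ 0} => z.1.1) hab
    simp at this
    exact Fin.ext this
  have hle : m - k ≤ Fintype.card {i // lam' S i ≠ 0} := by
    simpa using Fintype.card_le_of_injective _ hinj
  omega

lemma sum_lam_eq (S : Matrix (Fin n) (Fin m) ℝ) :
    ∑ j, lam S j = ∑ i : Fin (min n m),
      lam' S ⟨m - 1 - i, by have := i.isLt; omega⟩ := by
  classical
  set F : ℕ → ℝ := fun k => if hk : k < m then lam' S ⟨k, hk⟩ else 0 with hF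
  have h1 : ∑ j, lam S j = ∑ j, lam' S j :=
    (Equiv.sum_comp (Tuple.sort (lam S)) (lam S)).symm
  have h2 : ∑ j, lam' S j = ∑ k ∈ Finset.range m, F k := by
    rw [← Fin.sum_univ_eq_sum_range]
    exact Finset.sum_congr rfl fun j _ => by simp [hF, j.isLt]
  have h3 : ∑ k ∈ Finset.range m, F k = ∑ k ∈ Finset.range m, F (m - 1 - k) :=
    (Finset.sum_range_reflect F m).symm
  have hνm : min n m ≤ m := Nat.min_le_right n m
  have h4 : ∑ k ∈ Finset.range m, F (m - 1 - k)
      = ∑ k ∈ Finset.range (min n m), F (m - 1 - k)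
      + ∑ k ∈ Finset.Ico (min n m) m, F (m - 1 - k) :=
    (Finset.sum_range_add_sum_Ico (fun k => F (m - 1 - k)) hνm).symm
  have h5 : ∑ k ∈ Finset.Ico (min n m) m, F (m - 1 - k) = 0 := by
    apply Finset.sum_eq_zero
    intro k hk
    rw [Finset.mem_Ico] at hk
    rcases le_or_gt m n with hmn | hnm
    · omega
    · have hν : min n m = n := Nat.min_eq_left (le_of_lt hnm)
      have hk1 : m - 1 - k < m := by omega
      have hk2 : m - 1 - k < m - n := by omega
      simp only [hF, dif_pos hk1]
      exact lam'_zero S hnm _ hk2 hk1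
  have h6 : ∑ k ∈ Finset.range (min n m), F (m - 1 - k)
      = ∑ i : Fin (min n m), lam' S ⟨m - 1 - i, by have := i.isLt; omega⟩ := by
    rw [← Fin.sum_univ_eq_sum_range (fun k => F (m - 1 - k))]
    refine Finset.sum_congr rfl fun i _ => ?_
    have him : m - 1 - (i : ℕ) < m := by have := i.isLt; omega
    simp only [hF, dif_pos him]
  rw [h1, h2, h3, h4, h5, add_zero, h6]

end RegAux

open RegAux in
/-- For `S ∈ ℝ^{n×m}` with `ν = min n m`, the regularizer
`r(S) = (1/2)‖S‖₂² − (1/(2ν))‖S‖_F²` equals `0` if and only if all `ν` singular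
values `σ₁(S), …, σ_ν(S)` of `S` are equal. -/
theorem reg_eq_zero_iff_svals_equal {n m : ℕ} (S : Matrix (Fin n) (Fin m) ℝ) :
    reg S = 0 ↔ ∀ i j : Fin (min n m), svals S i = svals S j := by
  rcases Nat.eq_zero_or_pos (min n m) with hν | hν
  · constructor
    · intro _ i _
      exact absurd i.isLt (by omega)
    · intro _
      have hfrob : frobNorm S = 0 := by
        rcases Nat.min_eq_zero_iff.mp hν with h | h
        · subst h; simp [frobNorm]
        · subst h; simp [frobNorm]
      have hop : opNorm S = 0 := by
        have hz : LinearMap.toContinuousLinearMap (Matrix.toEuclideanLin S) = 0 := by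
          rcases Nat.min_eq_zero_iff.mp hν with h | h
          · subst h
            exact ContinuousLinearMap.ext fun x => Subsingleton.elim _ _
          · subst h
            exact ContinuousLinearMap.ext fun x => by
              rw [Subsingleton.elim x 0, map_zero]; rfl
        rw [opNorm, hz, norm_zero]
      simp [reg, hfrob, hop]
  · have hm : 0 < m := lt_of_lt_of_le hν (Nat.min_le_right n m)
    have hm1 : m - 1 < m := by omega
    set c : ℝ := lam' S ⟨m - 1, hm1⟩ with hc
    set L : Fin (min n m) → ℝ :=
      fun i => lam' S ⟨m - 1 - i, by have := i.isLt; omega⟩ with hL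
    have hLnn : ∀ i, 0 ≤ L i := fun i => lam'_nonneg S _
    have hLle : ∀ i, L i ≤ c := fun i =>
      lam'_mono S (by simp only [Fin.le_def]; omega)
    have hsv : ∀ i, svals S i = Real.sqrt (L i) := fun i => rfl
    have hsv2 : ∀ i, svals S i ^ 2 = L i := fun i => by
      rw [hsv, Real.sq_sqrt (hLnn i)]
    have hop2 : opNorm S ^ 2 = c := by
      rw [opNorm_eq S hm, Real.sq_sqrt (lam'_nonneg S _)]
    have hfr : frobNorm S ^ 2 = ∑ i, L i := by rw [frob_sq, sum_lam_eq]
    have hL0 : L ⟨0, hν⟩ = c := by simp [hL, hc]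
    have hν' : (0:ℝ) < (min n m : ℝ) := by exact_mod_cast hν
    have key : reg S = 0 ↔ (min n m : ℝ) * c = ∑ i, L i := by
      simp only [reg]
      rw [hop2, hfr]
      constructor
      · intro h; field_simp at h; linarith
      · intro h; field_simp; linarith
    have key2 : ((min n m : ℝ) * c = ∑ i, L i) ↔ ∀ i, L i = c := by
      have hcst : (min n m : ℝ) * c = ∑ _i : Fin (min n m), c := by
        rw [Finset.sum_const, Finset.card_univ, Fintype.card_fin, nsmul_eq_mul, Nat.cast_min]
      rw [hcst, ← sub_eq_zero, ← Finset.sum_sub_distrib,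
        Finset.sum_eq_zero_iff_of_nonneg (fun i _ => sub_nonneg.mpr (hLle i))]
      constructor
      · exact fun h i => (sub_eq_zero.mp (h i (Finset.mem_univ i))).symm
      · exact fun h i _ => by rw [h i, sub_self]
    rw [key, key2]
    constructor
    · intro h i j
      rw [hsv i, hsv j, h i, h j]
    · intro h i
      calc L i = svals S i ^ 2 := (hsv2 i).symm
        _ = svals S ⟨0, hν⟩ ^ 2 := by rw [h i ⟨0, hν⟩]
        _ = L ⟨0, hν⟩ := hsv2 _
        _ = c := hL0
end

section
/- Let S ∈ ℝ^{n×m} with S ≠ 0 and ν = min(n,m). Then r(S) = 0 if and only if S has full rank (rank S = ν) and κ(S) = 1, where κ(S) = σ_max(S)/σ_min>0(S). -/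
open Matrix

open scoped RealInnerProductSpace

namespace RegAux

lemma conj_dot {m : ℕ} (U B : Matrix (Fin m) (Fin m) ℝ) (x : Fin m → ℝ) :
    x ⬝ᵥ ((U * B * Uᵀ) *ᵥ x) = (Uᵀ *ᵥ x) ⬝ᵥ (B *ᵥ (Uᵀ *ᵥ x)) := by
  rw [mul_assoc, ← Matrix.mulVec_mulVec, ← Matrix.mulVec_mulVec, Matrix.dotProduct_mulVec,
    ← Matrix.mulVec_transpose]

lemma quad_eq {n m : ℕ} (S : Matrix (Fin n) (Fin m) ℝ) (x : EuclideanSpace ℝ (Fin m)) :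
    ‖(LinearMap.toContinuousLinearMap (Matrix.toEuclideanLin S)) x‖ ^ 2
      = ⇑x ⬝ᵥ ((Sᵀ * S) *ᵥ ⇑x) := by
  have h : (S *ᵥ ⇑x) ⬝ᵥ (S *ᵥ ⇑x) = ⇑x ⬝ᵥ ((Sᵀ * S) *ᵥ ⇑x) := by
    rw [← Matrix.mulVec_mulVec, Matrix.dotProduct_mulVec ⇑x, Matrix.vecMul_transpose]
  rw [← h, LinearMap.coe_toContinuousLinearMap', Matrix.toEuclideanLin_apply,
    EuclideanSpace.norm_eq, Real.sq_sqrt (by positivity)]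
  simp [dotProduct, sq_abs, pow_two]

lemma quad_bound {m : ℕ} (A : Matrix (Fin m) (Fin m) ℝ) (hA : A.IsHermitian) (c : ℝ)
    (hmax : ∀ j, hA.eigenvalues j ≤ c) (x : Fin m → ℝ) :
    x ⬝ᵥ (A *ᵥ x) ≤ c * (x ⬝ᵥ x) := by
  have hst : (star (hA.eigenvectorUnitary : Matrix (Fin m) (Fin m) ℝ))
      = (hA.eigenvectorUnitary : Matrix (Fin m) (Fin m) ℝ)ᵀ := by
    simp [Matrix.star_eq_conjTranspose, Matrix.conjTranspose_eq_transpose_of_trivial]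
  have hdiag : Matrix.diagonal (RCLike.ofReal ∘ hA.eigenvalues)
      = Matrix.diagonal hA.eigenvalues := by congr 1
  have hA' : A = (hA.eigenvectorUnitary : Matrix (Fin m) (Fin m) ℝ)
      * Matrix.diagonal hA.eigenvalues * (hA.eigenvectorUnitary : Matrix (Fin m) (Fin m) ℝ)ᵀ := by
    conv_lhs => rw [hA.spectral_theorem]
    rw [Unitary.conjStarAlgAut_apply, hst, hdiag]
  set U := (hA.eigenvectorUnitary : Matrix (Fin m) (Fin m) ℝ) with hUdef
  set y := Uᵀ *ᵥ x with hy
  have h1 : x ⬝ᵥ (A *ᵥ x) = y ⬝ᵥ (Matrix.diagonal hA.eigenvalues *ᵥ y) := by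
    conv_lhs => rw [hA']
    rw [conj_dot]
  have h2 : y ⬝ᵥ y = x ⬝ᵥ x := by
    have hid : U * 1 * Uᵀ = 1 := by
      rw [mul_one, ← hst]
      exact Matrix.mem_unitaryGroup_iff.mp hA.eigenvectorUnitary.2
    have := conj_dot U 1 x
    rw [hid] at this
    simpa using this.symm
  rw [h1, ← h2]
  have hd : y ⬝ᵥ (Matrix.diagonal hA.eigenvalues *ᵥ y) = ∑ j, hA.eigenvalues j * y j ^ 2 := by
    simp only [dotProduct, Matrix.mulVec_diagonal]
    exact Finset.sum_congr rfl fun i _ => by ring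
  rw [hd]
  have hyy : c * (y ⬝ᵥ y) = ∑ j, c * y j ^ 2 := by
    simp only [dotProduct, Finset.mul_sum]
    exact Finset.sum_congr rfl fun i _ => by ring
  rw [hyy]
  exact Finset.sum_le_sum fun j _ => by nlinarith [sq_nonneg (y j), hmax j]

lemma opNorm_eq_sqrt {n m : ℕ} (S : Matrix (Fin n) (Fin m) ℝ) (j0 : Fin m)
    (hmax : ∀ j, (gram_isHermitian S).eigenvalues j ≤ (gram_isHermitian S).eigenvalues j0)
    (h0 : 0 ≤ (gram_isHermitian S).eigenvalues j0) :
    opNorm S = Real.sqrt ((gram_isHermitian S).eigenvalues j0) := by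
  set hA := gram_isHermitian S
  set c := hA.eigenvalues j0 with hc
  set T := LinearMap.toContinuousLinearMap (Matrix.toEuclideanLin S) with hT
  apply le_antisymm
  · apply ContinuousLinearMap.opNorm_le_bound _ (Real.sqrt_nonneg c)
    intro x
    have h1 : ‖T x‖ ^ 2 ≤ c * ‖x‖ ^ 2 := by
      rw [quad_eq]
      have h2 : ‖x‖ ^ 2 = ⇑x ⬝ᵥ ⇑x := by
        rw [EuclideanSpace.norm_eq, Real.sq_sqrt (by positivity)]
        simp [dotProduct, sq_abs, pow_two]
      rw [h2]
      exact quad_bound _ hA c hmax _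
    calc ‖T x‖ = Real.sqrt (‖T x‖ ^ 2) := (Real.sqrt_sq (norm_nonneg _)).symm
      _ ≤ Real.sqrt (c * ‖x‖ ^ 2) := Real.sqrt_le_sqrt h1
      _ = Real.sqrt c * ‖x‖ := by
          rw [Real.sqrt_mul h0, Real.sqrt_sq (norm_nonneg _)]
  · set v := hA.eigenvectorBasis j0 with hvdef
    have hq : ‖T v‖ ^ 2 = c := by
      rw [quad_eq, hA.mulVec_eigenvectorBasis, dotProduct_smul]
      have h1 : ⇑(hA.eigenvectorBasis j0) ⬝ᵥ ⇑(hA.eigenvectorBasis j0)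
          = ⟪hA.eigenvectorBasis j0, hA.eigenvectorBasis j0⟫ := by
        rw [PiLp.inner_apply]; simp [dotProduct, mul_comm, pow_two]
      rw [smul_eq_mul, h1, real_inner_self_eq_norm_sq]
      simp [hA.eigenvectorBasis.orthonormal.1 j0, hc]
    have hnv : ‖v‖ = 1 := hA.eigenvectorBasis.orthonormal.1 j0
    have hle : ‖T v‖ ≤ ‖T‖ := by
      have := T.le_opNorm v
      rwa [hnv, mul_one] at this
    have hs : Real.sqrt c = ‖T v‖ := by
      rw [← hq, Real.sqrt_sq (norm_nonneg _)]
    rw [hs]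
    exact hle

end RegAux

/-- Let `S ∈ ℝ^{n×m}` with `S ≠ 0` and `ν = min n m`. Then `r(S) = 0`
if and only if `S` has full rank (`rank S = ν`) and `κ(S) = 1`, where
`κ(S) = σ_max(S) / σ_min>0(S)`. -/
theorem reg_eq_zero_iff_fullRank_and_kappa_one {n m : ℕ}
    (S : Matrix (Fin n) (Fin m) ℝ) (hS : S ≠ 0) :
    reg S = 0 ↔ (S.rank = min n m ∧ kappa S = 1) := by
  classical
  have hm : 0 < m := by
    rcases Nat.eq_zero_or_pos m with h | h
    · exfalso; apply hS; subst h; ext i j; exact j.elim0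
    · exact h
  have hn : 0 < n := by
    rcases Nat.eq_zero_or_pos n with h | h
    · exfalso; apply hS; subst h; ext i j; exact i.elim0
    · exact h
  set ν := min n m with hνdef
  have hν : 0 < ν := lt_min hn hm
  have hνm : ν ≤ m := min_le_right n m
  set μ : Fin m → ℝ := (gram_isHermitian S).eigenvalues with hμdef
  set g : Fin m → ℝ := μ ∘ Tuple.sort μ with hgdef
  have hgmono : Monotone g := Tuple.monotone_sort μ
  have hpsd : (Sᵀ * S).PosSemidef := by
    simpa [Matrix.conjTranspose_eq_transpose_of_trivial] using
      Matrix.posSemidef_conjTranspose_mul_self S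
  have hμnonneg : ∀ j, 0 ≤ μ j := fun j => hpsd.eigenvalues_nonneg j
  have hgnonneg : ∀ j, 0 ≤ g j := fun j => hμnonneg _
  set J : Fin ν → Fin m := fun i => ⟨m - 1 - (i : ℕ), by have := i.isLt; omega⟩ with hJdef
  have hsv : ∀ i : Fin ν, svals S i = Real.sqrt (g (J i)) := fun i => rfl
  have hm1 : m - 1 < m := by omega
  set c := g ⟨m - 1, hm1⟩ with hcdef
  have hgc : ∀ j : Fin m, g j ≤ c := fun j => hgmono (by
    rw [Fin.le_def]; have := j.isLt; simp; omega)
  have hμc : ∀ j : Fin m, μ j ≤ c := fun j => by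
    have h1 : μ j = g ((Tuple.sort μ).symm j) := by
      rw [hgdef]; simp
    rw [h1]; exact hgc _
  have hop : opNorm S = Real.sqrt c :=
    RegAux.opNorm_eq_sqrt S (Tuple.sort μ ⟨m - 1, hm1⟩) (fun j => hμc j) (hgnonneg _)
  have htrace : (Sᵀ * S).trace = ∑ j, μ j := by
    conv_lhs => rw [(gram_isHermitian S).spectral_theorem]
    rw [Unitary.conjStarAlgAut_apply, Matrix.trace_mul_cycle]
    simp [Unitary.coe_star_mul_self, Matrix.trace_diagonal]
    rfl
  have hfrob : frobNorm S ^ 2 = ∑ j, μ j := by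
    rw [← htrace, frobNorm, Real.sq_sqrt (by positivity)]
    simp only [Matrix.trace, Matrix.diag, Matrix.mul_apply, Matrix.transpose_apply, pow_two]
    exact Finset.sum_comm
  have hrank : S.rank = (Finset.univ.filter (fun j : Fin m => g j ≠ 0)).card := by
    rw [← Matrix.rank_transpose_mul_self S, (gram_isHermitian S).rank_eq_card_non_zero_eigs]
    have e : {j : Fin m // g j ≠ 0} ≃ {j : Fin m // μ j ≠ 0} :=
      Equiv.subtypeEquiv (Tuple.sort μ) (fun j => Iff.rfl)
    rw [show Fintype.card {i : Fin m // μ i ≠ 0}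
        = Fintype.card {j : Fin m // g j ≠ 0} from (Fintype.card_congr e).symm]
    exact Fintype.card_subtype _
  have hrank_le : S.rank ≤ ν :=
    le_min (by simpa using S.rank_le_card_height) (by simpa using S.rank_le_card_width)
  have htail : ∀ j : Fin m, (j : ℕ) < m - ν → g j = 0 := by
    intro j hj
    by_contra h0
    have hsub : Finset.Ici j ⊆ Finset.univ.filter (fun k : Fin m => g k ≠ 0) := by
      intro k hk
      rw [Finset.mem_Ici] at hk
      simp only [Finset.mem_filter, Finset.mem_univ, true_and]
      intro hzero
      exact h0 (le_antisymm ((hgmono hk).trans_eq hzero) (hgnonneg j))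
    have hcard : m - (j : ℕ) ≤ (Finset.univ.filter (fun k : Fin m => g k ≠ 0)).card := by
      calc m - (j : ℕ) = (Finset.Ici j).card := (Fin.card_Ici j).symm
        _ ≤ _ := Finset.card_le_card hsub
    rw [← hrank] at hcard
    omega
  have hJinj : Function.Injective J := by
    intro a b h
    have h1 := congrArg Fin.val h
    simp only [hJdef] at h1
    have := a.isLt; have := b.isLt
    apply Fin.ext; omega
  have himg : Finset.univ.filter (fun j : Fin m => m - ν ≤ (j : ℕ))
      = Finset.image J Finset.univ := by
    ext b
    simp only [Finset.mem_filter, Finset.mem_univ, true_and, Finset.mem_image]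
    constructor
    · intro hb
      have hblt := b.isLt
      refine ⟨⟨m - 1 - (b : ℕ), by omega⟩, ?_⟩
      apply Fin.ext
      simp only [hJdef]
      omega
    · rintro ⟨i, rfl⟩
      have := i.isLt
      simp only [hJdef]
      omega
  have hsum : ∑ i : Fin ν, g (J i) = ∑ j : Fin m, g j := by
    have h1 : ∑ j : Fin m, g j
        = ∑ j ∈ Finset.univ.filter (fun j : Fin m => m - ν ≤ (j : ℕ)), g j := by
      symm
      apply Finset.sum_subset (Finset.filter_subset _ _)
      intro j _ hj
      simp only [Finset.mem_filter, Finset.mem_univ, true_and, not_le] at hj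
      exact htail j hj
    rw [h1, himg, Finset.sum_image (fun a _ b _ h => hJinj h)]
  have hc_pos : 0 < c := by
    have hpos : 0 < ∑ j, μ j := by
      obtain ⟨i, j, hij⟩ : ∃ i j, S i j ≠ 0 := by
        by_contra h
        push_neg at h
        exact hS (by ext i j; exact h i j)
      rw [← hfrob, frobNorm, Real.sq_sqrt (by positivity)]
      apply Finset.sum_pos' (fun i _ => Finset.sum_nonneg fun j _ => sq_nonneg _)
      exact ⟨i, Finset.mem_univ _,
        Finset.sum_pos' (fun j _ => sq_nonneg _) ⟨j, Finset.mem_univ _, by positivity⟩⟩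
    by_contra hle
    push_neg at hle
    have hz : ∀ j, μ j = 0 := fun j => le_antisymm ((hμc j).trans hle) (hμnonneg j)
    simp [hz] at hpos
  have hsqc_pos : 0 < Real.sqrt c := Real.sqrt_pos.mpr hc_pos
  have hgJc : ∀ i : Fin ν, g (J i) ≤ c := fun i => hgc _
  have hν' : (0 : ℝ) < (ν : ℝ) := by exact_mod_cast hν
  have hgsum : ∑ j : Fin m, g j = ∑ j : Fin m, μ j := Equiv.sum_comp (Tuple.sort μ) μ
  have hkey : reg S = 0 ↔ ∀ i : Fin ν, g (J i) = c := by
    have e1 : reg S = (1 / (2 * (ν : ℝ))) * (∑ i : Fin ν, (c - g (J i))) := by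
      rw [reg, ← Nat.cast_min, ← hνdef, hop, Real.sq_sqrt hc_pos.le, hfrob, ← hgsum, ← hsum]
      rw [Finset.sum_sub_distrib, Finset.sum_const, Finset.card_univ, Fintype.card_fin,
        nsmul_eq_mul]
      field_simp
    rw [e1]
    constructor
    · intro h0
      have hne : (1 / (2 * (ν : ℝ))) ≠ 0 := by positivity
      have hz : ∑ i : Fin ν, (c - g (J i)) = 0 := (mul_eq_zero.mp h0).resolve_left hne
      have hall := (Finset.sum_eq_zero_iff_of_nonneg
        (fun i _ => by have := hgJc i; linarith)).mp hz
      intro i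
      have := hall i (Finset.mem_univ i)
      linarith
    · intro h
      rw [Finset.sum_eq_zero (fun i _ => by rw [h i]; ring)]
      ring
  have hanti : ∀ i i' : Fin ν, i ≤ i' → svals S i' ≤ svals S i := by
    intro i i' h
    rw [hsv, hsv]
    apply Real.sqrt_le_sqrt
    apply hgmono
    rw [Fin.le_def] at h ⊢
    simp only [hJdef]
    omega
  haveI : Nonempty (Fin ν) := ⟨⟨0, hν⟩⟩
  have hJ0 : g (J ⟨0, hν⟩) = c := rfl
  constructor
  · intro hreg
    have hall : ∀ i : Fin ν, g (J i) = c := hkey.mp hreg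
    have hsvals : ∀ i : Fin ν, svals S i = Real.sqrt c := fun i => by rw [hsv, hall]
    constructor
    · rw [hrank]
      have hfil : Finset.univ.filter (fun j : Fin m => g j ≠ 0)
          = Finset.univ.filter (fun j : Fin m => m - ν ≤ (j : ℕ)) := by
        ext b
        simp only [Finset.mem_filter, Finset.mem_univ, true_and]
        constructor
        · intro hb
          by_contra hlt
          push_neg at hlt
          exact hb (htail b hlt)
        · intro hb
          have hblt := b.isLt
          have hbJ : b = J ⟨m - 1 - (b : ℕ), by omega⟩ := by
            apply Fin.ext
            simp only [hJdef]
            omega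
          rw [hbJ, hall]
          exact ne_of_gt hc_pos
      rw [hfil, himg, Finset.card_image_of_injective _ hJinj, Finset.card_univ,
        Fintype.card_fin]
    · have hmax : sigmaMax S = Real.sqrt c := by
        rw [sigmaMax]
        apply le_antisymm
        · exact ciSup_le fun i => (hsvals i).le
        · have h1 := le_ciSup (f := fun i : Fin ν => svals S i)
            (Set.Finite.bddAbove (Set.finite_range _)) ⟨0, hν⟩
          calc Real.sqrt c = svals S ⟨0, hν⟩ := (hsvals _).symm
            _ ≤ _ := h1
      have hmin : sigmaMinPos S = Real.sqrt c := by
        rw [sigmaMinPos]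
        have hset : {x | (∃ i, svals S i = x) ∧ 0 < x} = {Real.sqrt c} := by
          ext x
          simp only [Set.mem_setOf_eq, Set.mem_singleton_iff]
          constructor
          · rintro ⟨⟨i, rfl⟩, _⟩
            exact hsvals i
          · rintro rfl
            exact ⟨⟨⟨0, hν⟩, hsvals _⟩, hsqc_pos⟩
        rw [hset, csInf_singleton]
      rw [kappa, hmax, hmin, div_self (ne_of_gt hsqc_pos)]
  · rintro ⟨hrk, hkap⟩
    have hfil : Finset.univ.filter (fun j : Fin m => g j ≠ 0)
        = Finset.univ.filter (fun j : Fin m => m - ν ≤ (j : ℕ)) := by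
      apply Finset.eq_of_subset_of_card_le
      · intro b hb
        simp only [Finset.mem_filter, Finset.mem_univ, true_and] at hb ⊢
        by_contra hlt
        push_neg at hlt
        exact hb (htail b hlt)
      · have h1 : (Finset.univ.filter (fun j : Fin m => g j ≠ 0)).card = ν := by
          rw [← hrank]
          exact hrk
        rw [h1, himg, Finset.card_image_of_injective _ hJinj, Finset.card_univ,
          Fintype.card_fin]
    have hgpos : ∀ i : Fin ν, 0 < g (J i) := by
      intro i
      have hmem : J i ∈ Finset.univ.filter (fun j : Fin m => m - ν ≤ (j : ℕ)) := by
        simp only [Finset.mem_filter, Finset.mem_univ, true_and, hJdef]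
        have := i.isLt
        omega
      rw [← hfil, Finset.mem_filter] at hmem
      exact lt_of_le_of_ne (hgnonneg _) (Ne.symm hmem.2)
    have hsvpos : ∀ i : Fin ν, 0 < svals S i := fun i => by
      rw [hsv]; exact Real.sqrt_pos.mpr (hgpos i)
    have hi1lt : ν - 1 < ν := by omega
    have hmax : sigmaMax S = svals S ⟨0, hν⟩ := by
      rw [sigmaMax]
      apply le_antisymm
      · exact ciSup_le fun i => hanti ⟨0, hν⟩ i (by rw [Fin.le_def]; simp)
      · exact le_ciSup (f := fun i : Fin ν => svals S i)
          (Set.Finite.bddAbove (Set.finite_range _)) ⟨0, hν⟩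
    have hminmem : svals S ⟨ν - 1, hi1lt⟩ ∈ {x | (∃ i, svals S i = x) ∧ 0 < x} :=
      ⟨⟨_, rfl⟩, hsvpos _⟩
    have hlb : ∀ x ∈ {x | (∃ i, svals S i = x) ∧ 0 < x}, svals S ⟨ν - 1, hi1lt⟩ ≤ x := by
      rintro x ⟨⟨i, rfl⟩, _⟩
      exact hanti i ⟨ν - 1, hi1lt⟩ (by rw [Fin.le_def]; have := i.isLt; simp; omega)
    have hmin : sigmaMinPos S = svals S ⟨ν - 1, hi1lt⟩ := by
      rw [sigmaMinPos]
      exact le_antisymm (csInf_le ⟨_, hlb⟩ hminmem) (le_csInf ⟨_, hminmem⟩ hlb)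
    rw [kappa, hmax, hmin] at hkap
    have heq : svals S ⟨0, hν⟩ = svals S ⟨ν - 1, hi1lt⟩ :=
      (div_eq_one_iff_eq (ne_of_gt (hsvpos _))).mp hkap
    apply hkey.mpr
    intro i
    have h1 : svals S i = svals S ⟨0, hν⟩ := by
      apply le_antisymm
      · exact hanti ⟨0, hν⟩ i (by rw [Fin.le_def]; simp)
      · calc svals S ⟨0, hν⟩ = svals S ⟨ν - 1, hi1lt⟩ := heq
          _ ≤ svals S i := hanti i ⟨ν - 1, hi1lt⟩
            (by rw [Fin.le_def]; have := i.isLt; simp; omega)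
    have h2 : g (J i) = svals S i ^ 2 := by
      rw [hsv, Real.sq_sqrt (hgnonneg _)]
    have h3 : g (J ⟨0, hν⟩) = svals S ⟨0, hν⟩ ^ 2 := by
      rw [hsv, Real.sq_sqrt (hgnonneg _)]
    rw [h2, h1, ← h3, hJ0]
end

section
/- Let S ∈ ℝ^{n×m} with S ≠ 0, ν = min(n,m), and suppose rank S < ν. Then r(S) > 0. -/
open Matrix

section FinalProof
open Matrix in
private lemma aux_trace_eq_sum {m : ℕ} (A : Matrix (Fin m) (Fin m) ℝ) (hA : A.IsHermitian) :
    A.trace = ∑ i, hA.eigenvalues i := by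
  conv_lhs => rw [hA.spectral_theorem]
  rw [Unitary.conjStarAlgAut_apply]
  rw [Matrix.trace_mul_comm, ← mul_assoc]
  have h1 : star (hA.eigenvectorUnitary : Matrix (Fin m) (Fin m) ℝ) *
      (hA.eigenvectorUnitary : Matrix (Fin m) (Fin m) ℝ) = 1 :=
    (Unitary.mem_iff.mp hA.eigenvectorUnitary.2).1
  rw [h1, one_mul]
  simp [Matrix.trace_diagonal]

open Matrix in
private lemma aux_eig_le_opNorm_sq {n m : ℕ} (S : Matrix (Fin n) (Fin m) ℝ) (i : Fin m) :
    (gram_isHermitian S).eigenvalues i ≤ opNorm S ^ 2 := by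
  set hA := gram_isHermitian S
  set v : EuclideanSpace ℝ (Fin m) := hA.eigenvectorBasis i with hv
  have hval : hA.eigenvalues i = (S *ᵥ ⇑v) ⬝ᵥ (S *ᵥ ⇑v) := by
    rw [hA.eigenvalues_eq i]
    simp only [star_trivial, ← mulVec_mulVec, dotProduct_mulVec, vecMul_transpose]
    rfl
  have hnorm1 : ‖v‖ = 1 := hA.eigenvectorBasis.orthonormal.1 i
  have hy : (S *ᵥ ⇑v) ⬝ᵥ (S *ᵥ ⇑v) = ‖Matrix.toEuclideanLin S v‖ ^ 2 := by
    rw [EuclideanSpace.norm_eq]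
    rw [Real.sq_sqrt (by positivity)]
    simp [dotProduct, Matrix.toEuclideanLin_apply, sq, WithLp.equiv,
      Real.norm_eq_abs, abs_mul_abs_self]
  have hle : ‖Matrix.toEuclideanLin S v‖ ≤ opNorm S * ‖v‖ := by
    have := (LinearMap.toContinuousLinearMap (Matrix.toEuclideanLin S)).le_opNorm v
    simpa [opNorm] using this
  rw [hval, hy]
  rw [hnorm1, mul_one] at hle
  have h0 : (0:ℝ) ≤ ‖Matrix.toEuclideanLin S v‖ := norm_nonneg _
  nlinarith [hle, h0]

open Matrix in
private lemma aux_opNorm_pos {n m : ℕ} (S : Matrix (Fin n) (Fin m) ℝ) (hS : S ≠ 0) :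
    0 < opNorm S := by
  rcases (norm_nonneg (LinearMap.toContinuousLinearMap (Matrix.toEuclideanLin S))).lt_or_eq
    with h | h
  · exact h
  · exfalso
    apply hS
    have hL : LinearMap.toContinuousLinearMap (Matrix.toEuclideanLin S) = 0 :=
      norm_eq_zero.mp h.symm
    have hE : Matrix.toEuclideanLin S = 0 := by
      ext x
      have : LinearMap.toContinuousLinearMap (Matrix.toEuclideanLin S) x = 0 := by
        rw [hL]; rfl
      simp only [LinearMap.coe_toContinuousLinearMap'] at this
      simp [this]
    have := Matrix.toEuclideanLin.injective (by simpa using hE : Matrix.toEuclideanLin S = Matrix.toEuclideanLin 0)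
    exact this

open Matrix in
private lemma aux_frob_sq {n m : ℕ} (S : Matrix (Fin n) (Fin m) ℝ) :
    frobNorm S ^ 2 = (Sᵀ * S).trace := by
  rw [frobNorm, Real.sq_sqrt (by positivity)]
  simp only [Matrix.trace, Matrix.diag, Matrix.mul_apply, Matrix.transpose_apply]
  rw [Finset.sum_comm]
  simp [sq]

end FinalProof

/-- Let `S ∈ ℝ^{n×m}` with `S ≠ 0`, `ν = min n m`, and suppose
`rank S < ν`. Then `r(S) > 0`. -/
theorem reg_pos_of_rank_lt {n m : ℕ} (S : Matrix (Fin n) (Fin m) ℝ)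
    (hS : S ≠ 0) (hrank : S.rank < min n m) :
    0 < reg S := by
  classical
  set B := opNorm S ^ 2 with hB
  have hBpos : 0 < B := by
    have := aux_opNorm_pos S hS
    positivity
  have hA := gram_isHermitian S
  have hrankA : (Sᵀ * S).rank = S.rank := by
    have := Matrix.rank_conjTranspose_mul_self S
    simpa [Matrix.conjTranspose_eq_transpose_of_trivial] using this
  have hcard : Fintype.card {i // hA.eigenvalues i ≠ 0} = S.rank := by
    rw [← hA.rank_eq_card_non_zero_eigs, hrankA]
  have hsum : ∑ i, hA.eigenvalues i ≤ (S.rank : ℝ) * B := by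
    have hsplit : ∑ i, hA.eigenvalues i
        = ∑ i ∈ Finset.univ.filter (fun i => hA.eigenvalues i ≠ 0), hA.eigenvalues i := by
      rw [Finset.sum_filter_ne_zero]
    rw [hsplit]
    have hle : ∀ i ∈ Finset.univ.filter (fun i => hA.eigenvalues i ≠ 0),
        hA.eigenvalues i ≤ B := fun i _ => aux_eig_le_opNorm_sq S i
    calc ∑ i ∈ Finset.univ.filter (fun i => hA.eigenvalues i ≠ 0), hA.eigenvalues i
        ≤ (Finset.univ.filter (fun i => hA.eigenvalues i ≠ 0)).card • B :=
          Finset.sum_le_card_nsmul _ _ _ hle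
      _ = (S.rank : ℝ) * B := by
          rw [← hcard, Fintype.card_subtype, nsmul_eq_mul]
  have hF : frobNorm S ^ 2 ≤ (S.rank : ℝ) * B := by
    rw [aux_frob_sq S, aux_trace_eq_sum _ hA]; exact hsum
  have hν : 0 < min n m := lt_of_le_of_lt (Nat.zero_le _) hrank
  have hνR : (0:ℝ) < (min n m : ℝ) := by exact_mod_cast hν
  have hrR : (S.rank : ℝ) + 1 ≤ (min n m : ℝ) := by exact_mod_cast hrank
  rw [reg]
  rw [sub_pos]
  have h1 : (1 / (2 * (min n m : ℝ))) * frobNorm S ^ 2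
      ≤ (1 / (2 * (min n m : ℝ))) * ((S.rank : ℝ) * B) := by
    apply mul_le_mul_of_nonneg_left hF
    positivity
  refine lt_of_le_of_lt h1 ?_
  rw [div_mul_eq_mul_div, div_mul_eq_mul_div, div_lt_div_iff₀ (by positivity) (by norm_num)]
  nlinarith [hBpos, hrR, hνR]
end

section
/- For every nonzero S ∈ ℝ^{n×m} with ν = min(n,m), the condition number satisfies κ(S) ≤ exp( ν · r(S) / σ_min>0(S)² ). -/
open Matrix

section helpers
variable {n m : ℕ} (S : Matrix (Fin n) (Fin m) ℝ)

lemma gram_psd : (Sᵀ * S).PosSemidef := by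
  simpa [Matrix.conjTranspose_eq_transpose_of_trivial] using
    Matrix.posSemidef_conjTranspose_mul_self S

lemma eig_nonneg (i : Fin m) : 0 ≤ (gram_isHermitian S).eigenvalues i :=
  (gram_psd S).eigenvalues_nonneg i

lemma eig_le_sq (i : Fin m) : (gram_isHermitian S).eigenvalues i ≤ opNorm S ^ 2 := by
  classical
  set hG := gram_isHermitian S
  set v : EuclideanSpace ℝ (Fin m) := hG.eigenvectorBasis i with hv
  have hv1 : ‖v‖ = 1 := hG.eigenvectorBasis.orthonormal.1 i
  have hμ : hG.eigenvalues i = (S *ᵥ ⇑v) ⬝ᵥ (S *ᵥ ⇑v) := by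
    have h := hG.eigenvalues_eq i
    rw [h, ← Matrix.mulVec_mulVec, Matrix.dotProduct_mulVec, Matrix.vecMul_transpose]
    simp [hv]
  have hnorm : ‖Matrix.toEuclideanLin S v‖ ^ 2 = (S *ᵥ ⇑v) ⬝ᵥ (S *ᵥ ⇑v) := by
    rw [Matrix.toEuclideanLin_apply, EuclideanSpace.norm_eq,
      Real.sq_sqrt (by positivity)]
    simp [dotProduct, pow_two]
  have hle : ‖Matrix.toEuclideanLin S v‖ ≤ opNorm S := by
    have h2 := (LinearMap.toContinuousLinearMap (Matrix.toEuclideanLin S)).le_opNorm v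
    simpa [opNorm, hv1] using h2
  calc hG.eigenvalues i = ‖Matrix.toEuclideanLin S v‖ ^ 2 := by rw [hμ, hnorm]
  _ ≤ opNorm S ^ 2 := by
      have := norm_nonneg (Matrix.toEuclideanLin S v)
      nlinarith

lemma sum_eig : ∑ i, (gram_isHermitian S).eigenvalues i = ∑ i, ∑ j, (S i j) ^ 2 := by
  classical
  have h := (gram_isHermitian S).spectral_theorem
  have ht : (Sᵀ * S).trace =
      (Matrix.diagonal (RCLike.ofReal ∘ (gram_isHermitian S).eigenvalues)).trace := by
    conv_lhs => rw [h]
    rw [Unitary.conjStarAlgAut_apply, Matrix.trace_mul_comm, ← Matrix.mul_assoc, Unitary.coe_star_mul_self, Matrix.one_mul]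
  have ht2 : (Sᵀ * S).trace = ∑ i, (gram_isHermitian S).eigenvalues i := by
    rw [ht, Matrix.trace_diagonal]
    simp
  rw [← ht2]
  simp only [Matrix.trace, Matrix.diag, Matrix.mul_apply, Matrix.transpose_apply]
  rw [Finset.sum_comm]
  simp [pow_two]

lemma eig_sorted_zero (j : Fin m) (hj : (j : ℕ) < m - min n m) :
    (gram_isHermitian S).eigenvalues
      (Tuple.sort (gram_isHermitian S).eigenvalues j) = 0 := by
  classical
  by_contra hne
  set μ := (gram_isHermitian S).eigenvalues with hμdef
  set σ := Tuple.sort μ with hσdef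
  have hpos : 0 < μ (σ j) := lt_of_le_of_ne (eig_nonneg S _) (Ne.symm hne)
  have hrank : Fintype.card {i // μ i ≠ 0} ≤ min n m := by
    rw [← (gram_isHermitian S).rank_eq_card_non_zero_eigs]
    refine le_min ?_ ?_
    · exact (Matrix.rank_mul_le_left Sᵀ S).trans
        (by simpa using Sᵀ.rank_le_card_width)
    · exact ((Sᵀ * S).rank_le_card_height).trans (by simp)
  have hmono := Tuple.monotone_sort μ
  have hinj : Function.Injective (fun k : Fin (min n m + 1) =>
      (⟨σ ⟨(j : ℕ) + k, by omega⟩, by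
        have h1 : μ (σ j) ≤ μ (σ ⟨(j : ℕ) + k, by omega⟩) :=
          hmono (by simp [Fin.le_def])
        exact ne_of_gt (lt_of_lt_of_le hpos h1)⟩ : {i // μ i ≠ 0})) := by
    intro k1 k2 hk
    simp only [Subtype.mk.injEq] at hk
    have := σ.injective hk
    simp only [Fin.mk.injEq] at this
    omega
  have hcard := Fintype.card_le_of_injective _ hinj
  simp only [Fintype.card_fin] at hcard
  omega

end helpers


/-- For every nonzero `S ∈ ℝ^{n×m}` with `ν = min n m`, the condition
number satisfies `κ(S) ≤ exp(ν · r(S) / σ_min>0(S)²)`. -/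
theorem kappa_le_exp_reg {n m : ℕ} (S : Matrix (Fin n) (Fin m) ℝ) (hS : S ≠ 0) :
    kappa S ≤ Real.exp ((min n m : ℝ) * reg S / sigmaMinPos S ^ 2) := by
  classical
  have hν : 0 < min n m := by
    rcases Nat.eq_zero_or_pos (min n m) with h0 | h; swap
    · exact h
    exfalso; apply hS; ext i j
    have hi := i.isLt; have hj := j.isLt
    omega
  have hνm : min n m ≤ m := min_le_right n m
  have hm : 0 < m := lt_of_lt_of_le hν hνm
  set μ := (gram_isHermitian S).eigenvalues with hμdef
  set σ := Tuple.sort μ with hσdef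
  have hmono : Monotone (μ ∘ σ) := Tuple.monotone_sort μ
  have ha0 : 0 ≤ opNorm S := norm_nonneg _
  -- each singular value is at most the operator norm
  have sval_le : ∀ i, svals S i ≤ opNorm S := by
    intro i
    have h1 : svals S i ≤ Real.sqrt (opNorm S ^ 2) := by
      simp only [svals, Function.comp_apply]
      exact Real.sqrt_le_sqrt (eig_le_sq S _)
    rwa [Real.sqrt_sq ha0] at h1
  -- Frobenius norm is positive
  have hfr : 0 < ∑ i, ∑ j, S i j ^ 2 := by
    obtain ⟨i, j, hij⟩ : ∃ i j, S i j ≠ 0 := by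
      by_contra h; push_neg at h
      exact hS (by ext i j; simp [h])
    refine Finset.sum_pos' (fun _ _ => Finset.sum_nonneg fun _ _ => sq_nonneg _)
      ⟨i, Finset.mem_univ _, Finset.sum_pos' (fun _ _ => sq_nonneg _)
        ⟨j, Finset.mem_univ _, by positivity⟩⟩
  -- there is a positive eigenvalue
  obtain ⟨i1, hi1⟩ : ∃ i, 0 < μ i := by
    by_contra h; push_neg at h
    have hz : ∀ i, μ i = 0 := fun i => le_antisymm (h i) (eig_nonneg S i)
    have : (0 : ℝ) = ∑ i, ∑ j, S i j ^ 2 := by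
      rw [← sum_eig S]; simp [← hμdef, hz]
    linarith
  have htop : 0 < μ (σ ⟨m - 1, by omega⟩) := by
    have hle : σ.symm i1 ≤ (⟨m - 1, by omega⟩ : Fin m) := by
      have := (σ.symm i1).isLt
      simp only [Fin.le_def]
      omega
    calc (0 : ℝ) < μ i1 := hi1
    _ = μ (σ (σ.symm i1)) := by rw [σ.apply_symm_apply]
    _ ≤ _ := hmono hle
  have hsv0 : 0 < svals S ⟨0, hν⟩ := by
    simp only [svals, Function.comp_apply]
    rw [Real.sqrt_pos]
    exact htop
  -- the set defining sigmaMinPos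
  have hsetfin : {x | (∃ i, svals S i = x) ∧ 0 < x}.Finite :=
    (Set.finite_range (svals S)).subset (fun x hx => hx.1)
  have hsetne : {x | (∃ i, svals S i = x) ∧ 0 < x}.Nonempty :=
    ⟨svals S ⟨0, hν⟩, ⟨⟨0, hν⟩, rfl⟩, hsv0⟩
  have hmem : sigmaMinPos S ∈ {x | (∃ i, svals S i = x) ∧ 0 < x} :=
    Set.Nonempty.csInf_mem hsetne hsetfin
  obtain ⟨⟨i₀, hi₀⟩, hspos⟩ := hmem
  set s := sigmaMinPos S with hsdef
  set j₀ : Fin m := ⟨m - 1 - i₀, by have := i₀.isLt; omega⟩ with hj₀def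
  have hj₀ : svals S i₀ = Real.sqrt (μ (σ j₀)) := rfl
  have hsq : s ^ 2 = μ (σ j₀) := by
    rw [← hi₀, hj₀, Real.sq_sqrt (eig_nonneg S _)]
  have hsa : s ≤ opNorm S := hi₀ ▸ sval_le i₀
  have hapos : 0 < opNorm S := lt_of_lt_of_le hspos hsa
  -- Frobenius norm squared equals sum of sorted eigenvalues
  have hfrob : frobNorm S ^ 2 = ∑ k : Fin m, μ (σ k) := by
    calc frobNorm S ^ 2 = ∑ i, ∑ j, S i j ^ 2 := by
          rw [frobNorm, Real.sq_sqrt (by positivity)]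
    _ = ∑ i, μ i := (sum_eig S).symm
    _ = ∑ k, μ (σ k) := (Equiv.sum_comp σ μ).symm
  -- cardinality of large indices
  have hcardIci : (Finset.univ.filter (fun k : Fin m => m - min n m ≤ (k : ℕ))).card
      = min n m := by
    have h1 : (Finset.univ.filter (fun k : Fin m => m - min n m ≤ (k : ℕ)))
        = Finset.Ici (⟨m - min n m, by omega⟩ : Fin m) := by
      ext k; simp [Fin.le_def]
    rw [h1, Fin.card_Ici]
    simp only [Fin.val_mk]
    omega
  have hj₀ge : m - min n m ≤ (j₀ : ℕ) := by
    have h1 : (j₀ : ℕ) = m - 1 - i₀ := rfl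
    have := i₀.isLt
    omega
  have hbound : ∀ k : Fin m,
      μ (σ k) ≤ (if m - min n m ≤ (k : ℕ) then opNorm S ^ 2 else 0) := by
    intro k
    by_cases hk : m - min n m ≤ (k : ℕ)
    · simp only [if_pos hk]; exact eig_le_sq S _
    · simp only [if_neg hk]
      exact le_of_eq (eig_sorted_zero S k (by omega))
  have hsum_le : ∑ k : Fin m, μ (σ k)
      ≤ s ^ 2 + ((min n m : ℝ) - 1) * opNorm S ^ 2 := by
    calc ∑ k : Fin m, μ (σ k)
        = μ (σ j₀) + ∑ k ∈ Finset.univ.erase j₀, μ (σ k) :=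
          (Finset.add_sum_erase _ _ (Finset.mem_univ j₀)).symm
    _ ≤ s ^ 2 + ∑ k ∈ Finset.univ.erase j₀,
          (if m - min n m ≤ (k : ℕ) then opNorm S ^ 2 else 0) :=
        add_le_add (le_of_eq hsq.symm) (Finset.sum_le_sum fun k _ => hbound k)
    _ = s ^ 2 + ((∑ k : Fin m, if m - min n m ≤ (k : ℕ) then opNorm S ^ 2 else 0)
          - opNorm S ^ 2) := by
        rw [Finset.sum_erase_eq_sub (Finset.mem_univ j₀), if_pos hj₀ge]
    _ = s ^ 2 + ((min n m : ℝ) * opNorm S ^ 2 - opNorm S ^ 2) := by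
        rw [Finset.sum_ite, Finset.sum_const, Finset.sum_const_zero, add_zero,
          hcardIci, nsmul_eq_mul, Nat.cast_min]
    _ = s ^ 2 + ((min n m : ℝ) - 1) * opNorm S ^ 2 := by ring
  -- the key inequality
  have hνR : (0 : ℝ) < (min n m : ℝ) := by exact_mod_cast hν
  have hregeq : (min n m : ℝ) * reg S
      = (min n m : ℝ) / 2 * opNorm S ^ 2 - 1 / 2 * frobNorm S ^ 2 := by
    rw [reg]; field_simp
  have hkey : (opNorm S ^ 2 - s ^ 2) / 2 ≤ (min n m : ℝ) * reg S := by
    have h5 : frobNorm S ^ 2 ≤ s ^ 2 + ((min n m : ℝ) - 1) * opNorm S ^ 2 := by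
      rw [hfrob]; exact hsum_le
    rw [hregeq]; linarith
  -- sigmaMax ≤ opNorm
  have hmax : sigmaMax S ≤ opNorm S := by
    haveI : Nonempty (Fin (min n m)) := ⟨⟨0, hν⟩⟩
    exact ciSup_le sval_le
  -- final chain
  have hx : 0 < opNorm S / s := div_pos hapos hspos
  have h6 : kappa S ≤ opNorm S / s := by
    rw [kappa, ← hsdef]
    exact (div_le_div_iff_of_pos_right hspos).mpr hmax
  refine h6.trans ?_
  have hlog : Real.log (opNorm S / s) ≤ (min n m : ℝ) * reg S / s ^ 2 := by
    have h7 := Real.log_le_sub_one_of_pos hx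
    have h8 : opNorm S / s - 1 ≤ ((opNorm S / s) ^ 2 - 1) / 2 := by
      nlinarith [sq_nonneg (opNorm S / s - 1)]
    have hs0 : s ≠ 0 := ne_of_gt hspos
    have h9 : ((opNorm S / s) ^ 2 - 1) / 2 = ((opNorm S ^ 2 - s ^ 2) / 2) / s ^ 2 := by
      rw [div_pow]
      rw [div_eq_div_iff (by norm_num) (by positivity)]
      field_simp
    have h10 : ((opNorm S ^ 2 - s ^ 2) / 2) / s ^ 2 ≤ (min n m : ℝ) * reg S / s ^ 2 :=
      (div_le_div_iff_of_pos_right (by positivity)).mpr hkey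
    linarith
  calc opNorm S / s = Real.exp (Real.log (opNorm S / s)) := (Real.exp_log hx).symm
  _ ≤ _ := Real.exp_le_exp.mpr hlog
end

section
/- Let S ∈ ℝ^{n×m} be nonzero with ν = min(n,m) ≥ 2, singular value decomposition S = U·Diag(σ₁,…,σ_ν)·Vᵀ (U, V orthogonal, u₁, v₁ the first columns), and suppose σ₁ = α·σ₂ with α > 1. Let λ > 0 satisfy 1/α < 1 − λ/(1 + λ/ν) and let S' = S − λ·(σ₁·u₁v₁ᵀ − (1/ν)·S). Then κ(S') = (1 − λ/(1 + λ/ν))·κ(S). -/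
open Matrix

section Aux

open Polynomial

/-- Characteristic polynomial is invariant under conjugation by an invertible matrix. -/
lemma charpoly_conj_aux {m : ℕ} (P M Q : Matrix (Fin m) (Fin m) ℝ)
    (h1 : P * Q = 1) : (P * M * Q).charpoly = M.charpoly := by
  have hPQ : P.map (C : ℝ →+* ℝ[X]) * Q.map (C : ℝ →+* ℝ[X]) = 1 := by
    rw [← Matrix.map_mul, h1, Matrix.map_one _ (map_zero _) (map_one _)]
  have hsc : Matrix.scalar (Fin m) (X : ℝ[X]) =
      P.map (C : ℝ →+* ℝ[X]) * Matrix.scalar (Fin m) (X : ℝ[X]) * Q.map (C : ℝ →+* ℝ[X]) := by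
    rw [← (Matrix.scalar_commute (X : ℝ[X]) (fun r' => Commute.all _ _) _).eq,
      Matrix.mul_assoc, hPQ, Matrix.mul_one]
  have hcm : charmatrix (P * M * Q) =
      P.map (C : ℝ →+* ℝ[X]) * charmatrix M * Q.map (C : ℝ →+* ℝ[X]) := by
    simp only [charmatrix, RingHom.mapMatrix_apply]
    rw [Matrix.mul_sub, Matrix.sub_mul, ← hsc, Matrix.map_mul, Matrix.map_mul]
  rw [Matrix.charpoly, Matrix.charpoly, hcm, Matrix.det_mul, Matrix.det_mul,
    mul_comm (Matrix.det _) _, mul_assoc, ← Matrix.det_mul, hPQ, Matrix.det_one, mul_one]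

/-- Eigenvalues of a real symmetric matrix conjugated from a diagonal one:
the multiset of eigenvalues equals the multiset of diagonal entries. -/
lemma eig_multiset {m : ℕ} (A : Matrix (Fin m) (Fin m) ℝ) (hA : A.IsHermitian)
    (V : Matrix (Fin m) (Fin m) ℝ) (e : Fin m → ℝ) (hV : Vᵀ * V = 1)
    (hAe : A = V * Matrix.diagonal e * Vᵀ) :
    Multiset.map hA.eigenvalues Finset.univ.val = Multiset.map e Finset.univ.val := by
  have key : ∀ (W : Matrix (Fin m) (Fin m) ℝ) (f : Fin m → ℝ), W * Wᵀ = 1 →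
      A = W * Matrix.diagonal f * Wᵀ → A.charpoly = ∏ i, (X - C (f i)) := by
    intro W f hW hAW
    rw [hAW, charpoly_conj_aux _ _ _ hW,
      Matrix.charpoly_of_upperTriangular _ (Matrix.blockTriangular_diagonal _)]
    simp
  have h1 : A.charpoly = ∏ i, (X - C (e i)) :=
    key V e (mul_eq_one_comm.mp hV) hAe
  have h2 : A.charpoly = ∏ i, (X - C (hA.eigenvalues i)) := by
    have hW : (hA.eigenvectorUnitary : Matrix (Fin m) (Fin m) ℝ) *
        (hA.eigenvectorUnitary : Matrix (Fin m) (Fin m) ℝ)ᵀ = 1 := by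
      have := (Unitary.mem_iff.mp hA.eigenvectorUnitary.2).2
      simpa [Matrix.star_eq_conjTranspose,
        Matrix.conjTranspose_eq_transpose_of_trivial] using this
    refine key _ _ hW ?_
    have := hA.spectral_theorem
    simpa [Matrix.star_eq_conjTranspose,
      Matrix.conjTranspose_eq_transpose_of_trivial] using this
  have hroots : ∀ (a : Fin m → ℝ),
      (∏ i, (X - C (a i))).roots = Multiset.map a Finset.univ.val := by
    intro a
    rw [Finset.prod_eq_multiset_prod]
    have : Multiset.map (fun i => X - C (a i)) Finset.univ.val =
        Multiset.map (fun x => X - C x) (Multiset.map a Finset.univ.val) := by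
      rw [Multiset.map_map]; rfl
    rw [this, roots_multiset_prod_X_sub_C]
  have := congrArg Polynomial.roots (h2.symm.trans h1)
  rwa [hroots, hroots] at this

/-- Sorting a tuple which is a permutation of an antitone tuple yields its reverse. -/
lemma sorted_comp_eq_rev {m : ℕ} (f g : Fin m → ℝ) (hg : Antitone g)
    (h : Multiset.map f Finset.univ.val = Multiset.map g Finset.univ.val) :
    f ∘ Tuple.sort f = g ∘ Fin.rev := by
  have hmono : Monotone (g ∘ Fin.rev) :=
    hg.comp (fun a b hab => Fin.rev_le_rev.mpr hab)
  apply List.ofFn_injective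
  refine List.Perm.eq_of_sortedLE ((Tuple.monotone_sort f).sortedLE_ofFn)
    (hmono.sortedLE_ofFn) ?_
  refine ((Tuple.sort f).ofFn_comp_perm f).trans ?_
  have hfg : List.Perm (List.ofFn f) (List.ofFn g) := by
    rw [← Multiset.coe_eq_coe]
    have hf := Fin.univ_val_map f
    have hgg := Fin.univ_val_map g
    rw [← hf, ← hgg]
    exact_mod_cast h
  refine hfg.trans ?_
  have : g ∘ Fin.rev = g ∘ ⇑(Fin.revPerm) := rfl
  rw [this]
  exact ((Fin.revPerm).ofFn_comp_perm g).symm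

/-- Product of a rectangular diagonal transpose with a rectangular diagonal. -/
lemma diagRect_transpose_mul {n m : ℕ} (a b : Fin (min n m) → ℝ) :
    (diagRect (n := n) (m := m) a)ᵀ * diagRect b =
      Matrix.diagonal (fun j : Fin m =>
        if h : (j : ℕ) < min n m then a ⟨j, h⟩ * b ⟨j, h⟩ else 0) := by
  ext j k
  simp only [Matrix.mul_apply, Matrix.transpose_apply, diagRect, Matrix.of_apply,
    Matrix.diagonal_apply]
  rcases eq_or_ne j k with rfl | hjk
  · rw [if_pos rfl]
    by_cases h : (j : ℕ) < min n m
    · rw [dif_pos h]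
      rw [Finset.sum_eq_single (⟨(j : ℕ), by omega⟩ : Fin n)]
      · simp
      · intro i _ hi
        have : (i : ℕ) ≠ (j : ℕ) := fun hc => hi (Fin.ext hc)
        rw [dif_neg this, zero_mul]
      · intro hmem; exact absurd (Finset.mem_univ _) hmem
    · rw [dif_neg h]
      apply Finset.sum_eq_zero
      intro i _
      have : (i : ℕ) ≠ (j : ℕ) := by
        intro hc
        exact h (by omega)
      rw [dif_neg this, zero_mul]
  · rw [if_neg hjk]
    apply Finset.sum_eq_zero
    intro i _
    by_cases h1 : (i : ℕ) = (j : ℕ)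
    · have h2 : (i : ℕ) ≠ (k : ℕ) := by
        intro hc
        exact hjk (Fin.ext (h1.symm.trans hc))
      rw [dif_neg h2, mul_zero]
    · rw [dif_neg h1, zero_mul]

/-- The singular values of `U * diagRect d * Vᵀ` for orthogonal `U`, `V` and
nonnegative antitone `d` are exactly `d`. -/
lemma svals_svd {n m : ℕ} (U : Matrix (Fin n) (Fin n) ℝ) (V : Matrix (Fin m) (Fin m) ℝ)
    (hU : Uᵀ * U = 1) (hV : Vᵀ * V = 1) (d : Fin (min n m) → ℝ)
    (hmono : Antitone d) (hnn : ∀ i, 0 ≤ d i) :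
    svals (U * diagRect d * Vᵀ) = d := by
  set S := U * diagRect d * Vᵀ with hSdef
  set e : Fin m → ℝ := fun j =>
    if h : (j : ℕ) < min n m then d ⟨j, h⟩ * d ⟨j, h⟩ else 0 with hedef
  have hgram : Sᵀ * S = V * Matrix.diagonal e * Vᵀ := by
    have h1 : Sᵀ = V * (diagRect d)ᵀ * Uᵀ := by
      rw [hSdef, Matrix.transpose_mul, Matrix.transpose_mul, Matrix.transpose_transpose,
        Matrix.mul_assoc]
    rw [h1, hSdef]
    have h2 : V * (diagRect d)ᵀ * Uᵀ * (U * diagRect d * Vᵀ)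
        = V * ((diagRect d)ᵀ * (Uᵀ * U) * diagRect d) * Vᵀ := by
      simp only [Matrix.mul_assoc]
    rw [h2, hU, Matrix.mul_one, diagRect_transpose_mul]
  have heanti : Antitone e := by
    intro j k hjk
    simp only [hedef]
    by_cases hk : (k : ℕ) < min n m
    · have hj : (j : ℕ) < min n m := lt_of_le_of_lt (Fin.le_def.mp hjk) hk
      rw [dif_pos hk, dif_pos hj]
      have hle : d ⟨k, hk⟩ ≤ d ⟨j, hj⟩ := hmono (Fin.mk_le_mk.mpr (Fin.le_def.mp hjk))
      exact mul_le_mul hle hle (hnn _) (hnn _)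
    · rw [dif_neg hk]
      by_cases hj : (j : ℕ) < min n m
      · rw [dif_pos hj]; exact mul_nonneg (hnn _) (hnn _)
      · rw [dif_neg hj]
  have hms := eig_multiset (Sᵀ * S) (gram_isHermitian S) V e hV hgram
  have hsorted := sorted_comp_eq_rev _ _ heanti hms
  funext i
  have him : (i : ℕ) < m := lt_of_lt_of_le i.isLt (min_le_right n m)
  have hrev : Fin.rev (⟨m - 1 - (i : ℕ), by omega⟩ : Fin m) = ⟨(i : ℕ), him⟩ := by
    apply Fin.ext
    rw [Fin.val_rev]
    simp only
    omega
  show Real.sqrt (((gram_isHermitian S).eigenvalues ∘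
      Tuple.sort (gram_isHermitian S).eigenvalues) ⟨m - 1 - (i : ℕ), _⟩) = d i
  rw [hsorted]
  simp only [Function.comp_apply, hrev, hedef]
  rw [dif_pos i.isLt]
  simp only [Fin.eta]
  exact Real.sqrt_mul_self (hnn i)

/-- The supremum of an antitone tuple is its first entry. -/
lemma iSup_of_antitone {ν : ℕ} (hν : 0 < ν) (d : Fin ν → ℝ) (hd : Antitone d) :
    ⨆ i, d i = d ⟨0, hν⟩ := by
  have : Nonempty (Fin ν) := ⟨⟨0, hν⟩⟩
  refine le_antisymm (ciSup_le fun i => hd (Fin.le_def.mpr (Nat.zero_le _)))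
    (le_ciSup (Set.finite_range d).bddAbove _)

/-- The infimum of the positive values of an antitone tuple is attained at the
largest index with positive value. -/
lemma sInf_pos_of_antitone {ν : ℕ} (d : Fin ν → ℝ) (hd : Antitone d) (k : Fin ν)
    (hk : 0 < d k) (hmax : ∀ j, 0 < d j → j ≤ k) :
    sInf {x | (∃ i, d i = x) ∧ 0 < x} = d k := by
  refine le_antisymm (csInf_le ⟨0, fun x hx => le_of_lt hx.2⟩ ⟨⟨k, rfl⟩, hk⟩)
    (le_csInf ⟨d k, ⟨⟨k, rfl⟩, hk⟩⟩ ?_)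
  rintro x ⟨⟨i, rfl⟩, hx⟩
  exact hd (hmax i hx)

end Aux

/-- Let `S ∈ ℝ^{n×m}` be nonzero with `ν = min n m ≥ 2`, singular
value decomposition `S = U·Diag(σ₁,…,σ_ν)·Vᵀ` (`U`, `V` orthogonal, `u₁`, `v₁` the
first columns), and suppose `σ₁ = α·σ₂` with `α > 1`. Let `λ > 0` satisfy
`1/α < 1 − λ/(1 + λ/ν)` and let `S' = S − λ·(σ₁·u₁v₁ᵀ − (1/ν)·S)`. Then
`κ(S') = (1 − λ/(1 + λ/ν))·κ(S)`. -/
theorem kappa_descent_case_one {n m : ℕ} (hν : 2 ≤ min n m)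
    (S : Matrix (Fin n) (Fin m) ℝ) (hS : S ≠ 0)
    (U : Matrix (Fin n) (Fin n) ℝ) (V : Matrix (Fin m) (Fin m) ℝ)
    (hU : Uᵀ * U = 1) (hV : Vᵀ * V = 1)
    (hSVD : S = U * diagRect (svals S) * Vᵀ)
    (α : ℝ) (hα : 1 < α)
    (hσ : svals S ⟨0, by omega⟩ = α * svals S ⟨1, by omega⟩)
    (lam : ℝ) (hlam : 0 < lam)
    (hcase : 1 / α < 1 - lam / (1 + lam / (min n m : ℝ))) :
    kappa (S - lam • (svals S ⟨0, by omega⟩ •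
        Matrix.of (fun i j => U i ⟨0, by omega⟩ * V j ⟨0, by omega⟩)
      - ((min n m : ℝ))⁻¹ • S))
    = (1 - lam / (1 + lam / (min n m : ℝ))) * kappa S := by
  have hn2 : 2 ≤ n := le_trans hν (min_le_left n m)
  have hm2 : 2 ≤ m := le_trans hν (min_le_right n m)
  have h0ν : 0 < min n m := by omega
  have h1ν : 1 < min n m := by omega
  have hmono : Antitone (svals S) := by
    intro i j hij
    simp only [svals]
    apply Real.sqrt_le_sqrt
    exact Tuple.monotone_sort (gram_isHermitian S).eigenvalues
      (Fin.mk_le_mk.mpr (by have := Fin.le_def.mp hij; omega))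
  have hnn : ∀ i, 0 ≤ svals S i := fun i => Real.sqrt_nonneg _
  have hσ0 : 0 < svals S ⟨0, h0ν⟩ := by
    rcases (hnn ⟨0, h0ν⟩).lt_or_eq with h | h
    · exact h
    · exfalso
      apply hS
      have hzero : ∀ i, svals S i = 0 := by
        intro i
        refine le_antisymm ?_ (hnn i)
        rw [h]
        exact hmono (Fin.le_def.mpr (Nat.zero_le _))
      have hD : diagRect (svals S) = 0 := by
        ext i j
        simp only [diagRect, Matrix.of_apply, Matrix.zero_apply]
        split_ifs with hij
        · exact hzero _
        · rfl
      rw [hSVD, hD, Matrix.mul_zero, Matrix.zero_mul]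
  have hσ' : svals S ⟨0, h0ν⟩ = α * svals S ⟨1, h1ν⟩ := hσ
  have hα0 : 0 < α := lt_trans one_pos hα
  have hσ1 : 0 < svals S ⟨1, h1ν⟩ := by
    have h := hσ0
    rw [hσ'] at h
    nlinarith [hnn ⟨1, h1ν⟩]
  have hνR : (0:ℝ) < (min n m : ℝ) := by exact_mod_cast h0ν
  set t := lam / (min n m : ℝ) with htdef
  have ht : 0 < t := div_pos hlam hνR
  have h1t : 0 < 1 + t := by linarith
  have hcpos : 0 < 1 - lam / (1 + t) := lt_trans (by positivity) hcase
  have hlt : 1 + t - lam = (1 - lam / (1 + t)) * (1 + t) := by field_simp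
  have hltpos : 0 < 1 + t - lam := by rw [hlt]; positivity
  have hαc : 1 < α * (1 - lam / (1 + t)) := by
    rw [div_lt_iff₀ hα0] at hcase
    nlinarith [hcase]
  have hkey : (1 + t) * svals S ⟨1, h1ν⟩ < (1 + t - lam) * svals S ⟨0, h0ν⟩ := by
    rw [hσ', hlt]
    nlinarith [mul_pos (mul_pos h1t hσ1) (sub_pos.mpr hαc)]
  set d' : Fin (min n m) → ℝ := fun i =>
    if (i : ℕ) = 0 then (1 + t - lam) * svals S ⟨0, h0ν⟩ else (1 + t) * svals S i
    with hd'def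
  have hd'nn : ∀ i, 0 ≤ d' i := by
    intro i
    simp only [hd'def]
    split_ifs
    · exact mul_nonneg hltpos.le (hnn _)
    · exact mul_nonneg h1t.le (hnn _)
  have hd'mono : Antitone d' := by
    intro i j hij
    simp only [hd'def]
    by_cases hj : (j : ℕ) = 0
    · have hi : (i : ℕ) = 0 := by have := Fin.le_def.mp hij; omega
      rw [if_pos hi, if_pos hj]
    · rw [if_neg hj]
      by_cases hi : (i : ℕ) = 0
      · rw [if_pos hi]
        have hj1 : (⟨1, h1ν⟩ : Fin (min n m)) ≤ j := by
          rw [Fin.le_def]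
          show 1 ≤ (j : ℕ)
          omega
        calc (1 + t) * svals S j ≤ (1 + t) * svals S ⟨1, h1ν⟩ :=
              mul_le_mul_of_nonneg_left (hmono hj1) h1t.le
          _ ≤ (1 + t - lam) * svals S ⟨0, h0ν⟩ := hkey.le
      · rw [if_neg hi]
        exact mul_le_mul_of_nonneg_left (hmono hij) h1t.le
  have hscalar : ∀ k : Fin (min n m), d' k = (1 + t) * svals S k
      - (lam * svals S ⟨0, h0ν⟩) * (if (k : ℕ) = 0 then (1:ℝ) else 0) := by
    intro k
    simp only [hd'def]
    by_cases h0 : (k : ℕ) = 0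
    · have hk : k = ⟨0, h0ν⟩ := Fin.ext h0
      rw [hk, if_pos rfl, if_pos rfl]
      ring
    · rw [if_neg h0, if_neg h0]
      ring
  have hMeq : (Matrix.of (fun i j => U i ⟨0, by omega⟩ * V j ⟨0, by omega⟩) :
        Matrix (Fin n) (Fin m) ℝ)
      = U * diagRect (n := n) (m := m) (fun i => if (i : ℕ) = 0 then (1:ℝ) else 0) * Vᵀ := by
    ext i j
    simp only [Matrix.of_apply, Matrix.mul_apply, Matrix.transpose_apply]
    symm
    rw [Finset.sum_eq_single (⟨0, by omega⟩ : Fin m)]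
    · have hinner : (∑ l, U i l *
          diagRect (n := n) (m := m) (fun i => if (i : ℕ) = 0 then (1:ℝ) else 0) l ⟨0, by omega⟩)
          = U i ⟨0, by omega⟩ := by
        rw [Finset.sum_eq_single (⟨0, by omega⟩ : Fin n)]
        · simp [diagRect]
        · intro l _ hl
          have hl0 : (l : ℕ) ≠ 0 := fun hc => hl (Fin.ext hc)
          simp [diagRect, hl0]
        · intro h; exact absurd (Finset.mem_univ _) h
      rw [hinner]
    · intro k _ hk
      have hk0 : (k : ℕ) ≠ 0 := fun hc => hk (Fin.ext hc)
      have hinner : (∑ l, U i l *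
          diagRect (n := n) (m := m) (fun i => if (i : ℕ) = 0 then (1:ℝ) else 0) l k) = 0 := by
        apply Finset.sum_eq_zero
        intro l _
        simp only [diagRect, Matrix.of_apply]
        split_ifs with h1 h2
        · have h2' : (l : ℕ) = 0 := h2
          exfalso
          omega
        · rw [mul_zero]
        · rw [mul_zero]
      rw [hinner, zero_mul]
    · intro h; exact absurd (Finset.mem_univ _) h
  have hDlin : diagRect d' = (1 + t) • diagRect (svals S)
      - (lam * svals S ⟨0, h0ν⟩) •
        diagRect (n := n) (m := m) (fun i => if (i : ℕ) = 0 then (1:ℝ) else 0) := by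
    ext i j
    simp only [Matrix.sub_apply, Matrix.smul_apply, smul_eq_mul, diagRect, Matrix.of_apply]
    by_cases hij : (i : ℕ) = (j : ℕ)
    · rw [dif_pos hij, dif_pos hij, dif_pos hij]
      exact hscalar _
    · rw [dif_neg hij, dif_neg hij, dif_neg hij]
      ring
  have hE : S - lam • (svals S ⟨0, by omega⟩ •
        Matrix.of (fun i j => U i ⟨0, by omega⟩ * V j ⟨0, by omega⟩)
      - ((min n m : ℝ))⁻¹ • S) = U * diagRect d' * Vᵀ := by
    calc S - lam • (svals S ⟨0, by omega⟩ •
        Matrix.of (fun i j => U i ⟨0, by omega⟩ * V j ⟨0, by omega⟩)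
      - ((min n m : ℝ))⁻¹ • S)
        = (1 + t) • S - (lam * svals S ⟨0, h0ν⟩) •
            (Matrix.of (fun i j => U i ⟨0, by omega⟩ * V j ⟨0, by omega⟩) :
              Matrix (Fin n) (Fin m) ℝ) := by
          rw [smul_sub, smul_smul, smul_smul, htdef, div_eq_mul_inv, add_smul, one_smul]
          abel
      _ = (1 + t) • (U * diagRect (svals S) * Vᵀ) - (lam * svals S ⟨0, h0ν⟩) •
            (U * diagRect (n := n) (m := m) (fun i => if (i : ℕ) = 0 then (1:ℝ) else 0) * Vᵀ) := by
          rw [← hSVD, ← hMeq]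
      _ = U * diagRect d' * Vᵀ := by
          rw [hDlin]
          simp only [Matrix.mul_sub, Matrix.sub_mul, Matrix.mul_smul, Matrix.smul_mul]
  rw [hE]
  have hsv' : svals (U * diagRect d' * Vᵀ) = d' := svals_svd U V hU hV d' hd'mono hd'nn
  have hne : (Finset.univ.filter (fun i => 0 < svals S i)).Nonempty :=
    ⟨⟨0, h0ν⟩, Finset.mem_filter.mpr ⟨Finset.mem_univ _, hσ0⟩⟩
  set K := (Finset.univ.filter (fun i => 0 < svals S i)).max' hne with hKdef
  have hKpos : 0 < svals S K :=
    (Finset.mem_filter.mp (Finset.max'_mem _ hne)).2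
  have hKmax : ∀ j, 0 < svals S j → j ≤ K := fun j hj =>
    Finset.le_max' _ j (Finset.mem_filter.mpr ⟨Finset.mem_univ _, hj⟩)
  have hK1 : (⟨1, h1ν⟩ : Fin (min n m)) ≤ K := hKmax _ hσ1
  have hK0 : (K : ℕ) ≠ 0 := by
    have h := Fin.le_def.mp hK1
    have h1 : (1 : ℕ) ≤ (K : ℕ) := h
    omega
  have hmax1 : sigmaMax S = svals S ⟨0, h0ν⟩ := iSup_of_antitone h0ν _ hmono
  have hmin1 : sigmaMinPos S = svals S K := sInf_pos_of_antitone _ hmono K hKpos hKmax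
  have hd'K : d' K = (1 + t) * svals S K := by
    simp only [hd'def]; rw [if_neg hK0]
  have hd'0 : d' ⟨0, h0ν⟩ = (1 + t - lam) * svals S ⟨0, h0ν⟩ := by
    simp [hd'def]
  have hmax2 : sigmaMax (U * diagRect d' * Vᵀ) = d' ⟨0, h0ν⟩ := by
    have : sigmaMax (U * diagRect d' * Vᵀ) = ⨆ i, d' i := by
      simp only [sigmaMax, hsv']
    rw [this]
    exact iSup_of_antitone h0ν _ hd'mono
  have hmin2 : sigmaMinPos (U * diagRect d' * Vᵀ) = d' K := by
    have : sigmaMinPos (U * diagRect d' * Vᵀ) = sInf {x | (∃ i, d' i = x) ∧ 0 < x} := by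
      simp only [sigmaMinPos, hsv']
    rw [this]
    refine sInf_pos_of_antitone _ hd'mono K ?_ ?_
    · rw [hd'K]; exact mul_pos h1t hKpos
    · intro j hj
      by_cases h0 : (j : ℕ) = 0
      · exact Fin.le_def.mpr (by omega)
      · apply hKmax
        simp only [hd'def] at hj
        rw [if_neg h0] at hj
        rcases mul_pos_iff.mp hj with ⟨_, h⟩ | ⟨h, _⟩
        · exact h
        · linarith
  simp only [kappa]
  rw [hmax1, hmin1, hmax2, hmin2, hd'0, hd'K, hlt]
  field_simp
end
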